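/- Let R be a commutative ring of characteristic p, let c ∈ R, and set S = R[X]/(X^p − X − c). Let v be the image of X in S and let σ be the unique R-algebra automorphism of S which satisfies σ(v) = v + 1. Then S/R is a Galois extension of rings with group ⟨σ⟩ (a cyclic group of order p). -/

import Mathlib

open Polynomial

private lemma as_comp_X_add_one (p : ℕ) (hp : p.Prime) (R : Type*) [CommRing R] [CharP R p]
    (c : R) : (X ^ p - X - C c).comp (X + 1) = X ^ p - X - C c := by
  haveI := Fact.mk hp
  have h : ((X : R[X]) + 1) ^ p = X ^ p + 1 ^ p := add_pow_char _ _ p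
  simp only [sub_comp, pow_comp, X_comp, C_comp, h]
  ring

private lemma as_comp_X_sub_one (p : ℕ) (hp : p.Prime) (R : Type*) [CommRing R] [CharP R p]
    (c : R) : (X ^ p - X - C c).comp (X - 1) = X ^ p - X - C c := by
  haveI := Fact.mk hp
  have h : ((X : R[X]) - 1) ^ p = X ^ p - 1 ^ p := sub_pow_char _ _
  simp only [sub_comp, pow_comp, X_comp, C_comp, h]
  ring

private lemma as_isUnit_cast (p : ℕ) (hp : p.Prime) (R : Type*) [CommRing R] [CharP R p]
    {d : ℕ} (hd : ¬ p ∣ d) : IsUnit (d : R) := by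
  haveI := Fact.mk hp
  have h0 : (d : ZMod p) ≠ 0 := by
    simpa [ZMod.natCast_eq_zero_iff] using hd
  have hu : IsUnit (d : ZMod p) := isUnit_iff_ne_zero.mpr h0
  have := hu.map (ZMod.castHom dvd_rfl R)
  simpa using this

private lemma as_fixed_poly (p : ℕ) (hp : p.Prime) (R : Type*) [CommRing R] [CharP R p]
    (g : R[X]) (hdeg : g.natDegree < p) (hg : g.comp (X + 1) = g) :
    g = C (g.coeff 0) := by
  by_contra hne
  have hd0 : g.natDegree ≠ 0 := fun h => hne (eq_C_of_natDegree_eq_zero h)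
  set d := g.natDegree with hdd
  have hd : 1 ≤ d := Nat.one_le_iff_ne_zero.mpr hd0
  have htaylor : g.comp (X + 1) = taylor 1 g := by
    rw [taylor_apply, C_1]
  have hcoeff : (g.comp (X + 1)).coeff (d - 1) = g.coeff (d - 1) + d * g.coeff d := by
    rw [htaylor, taylor_coeff]
    have hnd : (hasseDeriv (d - 1) g).natDegree < 2 := by
      have := natDegree_hasseDeriv_le g (d - 1)
      omega
    rw [eval_eq_sum_range' hnd]
    rw [Finset.sum_range_succ, Finset.sum_range_one]
    rw [hasseDeriv_coeff, hasseDeriv_coeff]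
    have h1 : 1 + (d - 1) = d := by omega
    have h2 : 0 + (d - 1) = d - 1 := by omega
    rw [h1, h2, Nat.choose_self]
    have h3 : d.choose (d - 1) = d := by
      have h5 := Nat.choose_symm (n := d) (k := 1) hd
      have h4 : d.choose 1 = d := Nat.choose_one_right d
      omega
    rw [h3]
    push_cast
    ring
  rw [hg] at hcoeff
  have hzero : (d : R) * g.coeff d = 0 := left_eq_add.mp hcoeff
  have hu : IsUnit (d : R) := as_isUnit_cast p hp R (Nat.not_dvd_of_pos_of_lt hd hdeg)
  have hc0 : g.coeff d = 0 := by
    rwa [IsUnit.mul_right_eq_zero hu] at hzero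
  have hg0 : g = 0 := leadingCoeff_eq_zero.mp hc0
  rw [hg0] at hdd
  exact hd0 (by simpa using hdd)

private lemma as_algEquiv_ext {R : Type*} [CommRing R] {f : R[X]}
    (e₁ e₂ : AdjoinRoot f ≃ₐ[R] AdjoinRoot f)
    (h : e₁ (AdjoinRoot.root f) = e₂ (AdjoinRoot.root f)) : e₁ = e₂ := by
  have h' : (e₁ : AdjoinRoot f →ₐ[R] AdjoinRoot f) = e₂ := AdjoinRoot.algHom_ext (by simpa using h)
  exact AlgEquiv.ext fun x => by
    have := DFunLike.congr_fun h' x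
    simpa using this

theorem artinSchreier_ring_extension_isGalois
    (p : ℕ) (hp : p.Prime) (R : Type*) [CommRing R] [CharP R p] (c : R) :
    ∃ σ : AdjoinRoot (X ^ p - X - C c) ≃ₐ[R] AdjoinRoot (X ^ p - X - C c),
      -- σ is the unique R-algebra automorphism sending v to v + 1
      σ (AdjoinRoot.root (X ^ p - X - C c)) = AdjoinRoot.root (X ^ p - X - C c) + 1 ∧
      (∀ τ : AdjoinRoot (X ^ p - X - C c) ≃ₐ[R] AdjoinRoot (X ^ p - X - C c),
        τ (AdjoinRoot.root (X ^ p - X - C c)) = AdjoinRoot.root (X ^ p - X - C c) + 1 →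
        τ = σ) ∧
      -- ⟨σ⟩ is cyclic of order p
      orderOf σ = p ∧
      -- R is the fixed ring of ⟨σ⟩
      (∀ x : AdjoinRoot (X ^ p - X - C c),
        (∀ k : ℕ, (σ ^ k) x = x) ↔ x ∈ (algebraMap R (AdjoinRoot (X ^ p - X - C c))).range) ∧
      -- the Galois condition for the group ⟨σ⟩
      (∀ M : Ideal (AdjoinRoot (X ^ p - X - C c)), M.IsMaximal →
        ∀ k : ℕ, σ ^ k ≠ 1 → ∃ s : AdjoinRoot (X ^ p - X - C c), (σ ^ k) s - s ∉ M) := by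
  haveI := Fact.mk hp
  haveI : Nontrivial R := CharP.nontrivial_of_char_ne_one hp.ne_one
  set f : R[X] := X ^ p - X - C c with hf
  have hfeq : f = X ^ p - (X + C c) := by rw [hf]; ring
  have hdeglin : (X + C c : R[X]).degree < (p : WithBot ℕ) := by
    refine lt_of_le_of_lt (degree_add_le _ _) ?_
    have h1 : (X : R[X]).degree = 1 := degree_X
    have h2 : (C c : R[X]).degree ≤ 1 := le_trans degree_C_le (by norm_num)
    have : max (X : R[X]).degree (C c).degree ≤ 1 := by rw [h1]; exact max_le le_rfl h2
    refine lt_of_le_of_lt this ?_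
    exact_mod_cast Nat.one_lt_cast.mpr hp.one_lt
  have hmonic : f.Monic := by
    rw [hfeq]; exact monic_X_pow_sub hdeglin
  have hdegf : f.natDegree = p := by
    rw [hfeq, natDegree_sub_eq_left_of_natDegree_lt, natDegree_X_pow]
    rw [natDegree_X_pow]
    refine lt_of_le_of_lt (natDegree_add_le _ _) ?_
    simp only [natDegree_X, natDegree_C]
    exact lt_of_le_of_lt (by norm_num) hp.one_lt
  haveI : Nontrivial (AdjoinRoot f) := by
    have h0 : (0 : ℕ) < (AdjoinRoot.powerBasis' hmonic).dim := by
      rw [AdjoinRoot.powerBasis'_dim, hdegf]; exact hp.pos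
    exact nontrivial_of_ne ((AdjoinRoot.powerBasis' hmonic).basis ⟨0, h0⟩) 0
      ((AdjoinRoot.powerBasis' hmonic).basis.ne_zero _)
  -- the root
  set v := AdjoinRoot.root f with hv
  have hroot0 : aeval v f = 0 := by
    rw [AdjoinRoot.aeval_eq, AdjoinRoot.mk_self]
  have hplus : aeval (v + 1) f = 0 := by
    have h := as_comp_X_add_one p hp R c
    have : aeval v (f.comp (X + 1)) = aeval (v + 1) f := by
      rw [aeval_comp]; simp
    rw [← this, ← hf] at *
    rw [h]
    exact hroot0
  have hminus : aeval (v - 1) f = 0 := by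
    have h := as_comp_X_sub_one p hp R c
    have h2 : aeval v (f.comp (X - 1)) = aeval (v - 1) f := by
      rw [aeval_comp]; simp
    rw [← h2, ← hf] at *
    rw [h]
    exact hroot0
  set φ : AdjoinRoot f →ₐ[R] AdjoinRoot f := AdjoinRoot.liftAlgHom f (Algebra.ofId R _) (v + 1) hplus with hφ
  set ψ : AdjoinRoot f →ₐ[R] AdjoinRoot f := AdjoinRoot.liftAlgHom f (Algebra.ofId R _) (v - 1) hminus with hψ
  have hφv : φ v = v + 1 := AdjoinRoot.liftAlgHom_root f (Algebra.ofId R _) (v + 1) hplus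
  have hψv : ψ v = v - 1 := AdjoinRoot.liftAlgHom_root f (Algebra.ofId R _) (v - 1) hminus
  have hcomp1 : φ.comp ψ = AlgHom.id R (AdjoinRoot f) := by
    apply AdjoinRoot.algHom_ext
    rw [← hv]
    simp [AlgHom.comp_apply, hψv, hφv, map_sub, map_one]
  have hcomp2 : ψ.comp φ = AlgHom.id R (AdjoinRoot f) := by
    apply AdjoinRoot.algHom_ext
    rw [← hv]
    simp [AlgHom.comp_apply, hψv, hφv, map_add, map_one]
  set σ : AdjoinRoot f ≃ₐ[R] AdjoinRoot f := AlgEquiv.ofAlgHom φ ψ hcomp1 hcomp2 with hσ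
  have hσv : σ v = v + 1 := hφv
  -- powers of σ
  have hσpow : ∀ k : ℕ, (σ ^ k) v = v + (k : AdjoinRoot f) := by
    intro k
    induction k with
    | zero => simp
    | succ n ih =>
      rw [pow_succ' σ n, AlgEquiv.mul_apply, ih, map_add, hσv, map_natCast]
      push_cast
      ring
  have hone : (1 : AdjoinRoot f) ≠ 0 := one_ne_zero
  have hσne : σ ≠ 1 := by
    intro h
    have := hσv
    rw [h] at this
    simp at this
  have hcastp : ((p : ℕ) : AdjoinRoot f) = 0 := by
    have h1 : ((p : ℕ) : R) = 0 := CharP.cast_eq_zero R p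
    calc ((p : ℕ) : AdjoinRoot f) = algebraMap R (AdjoinRoot f) ((p : ℕ) : R) := by
          rw [map_natCast]
      _ = 0 := by rw [h1, map_zero]
  have hσp : σ ^ p = 1 := by
    apply as_algEquiv_ext
    show (σ ^ p) v = (1 : AdjoinRoot f ≃ₐ[R] AdjoinRoot f) v
    rw [hσpow p, hcastp, add_zero]
    rfl
  have horder : orderOf σ = p := orderOf_eq_prime hσp hσne
  -- representation by polynomials of degree < p
  have hfne1 : f ≠ 1 := by
    intro h
    have h2 := hdegf
    rw [h, natDegree_one] at h2
    exact hp.ne_zero h2.symm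
  have hrep : ∀ x : AdjoinRoot f, ∃ g : R[X], g.natDegree < p ∧ AdjoinRoot.mk f g = x := by
    intro x
    obtain ⟨g, rfl⟩ := AdjoinRoot.mk_surjective x
    refine ⟨g %ₘ f, ?_, ?_⟩
    · have := natDegree_modByMonic_lt g hmonic hfne1
      omega
    · rw [modByMonic_eq_sub_mul_div g f, map_sub, map_mul, AdjoinRoot.mk_self,
        zero_mul, sub_zero]
  -- f divides only 0 among polynomials of degree < p
  have hdvd_zero : ∀ h : R[X], f ∣ h → h.natDegree < p → h = 0 := by
    intro h hdvd hlt
    by_contra hne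
    obtain ⟨q, rfl⟩ := hdvd
    have hq : q ≠ 0 := by rintro rfl; simp at hne
    have hmul := hmonic.natDegree_mul' hq
    rw [hdegf] at hmul
    omega
  -- action of σ on mk g
  have hσmk : ∀ g : R[X], σ (AdjoinRoot.mk f g) = AdjoinRoot.mk f (g.comp (X + 1)) := by
    intro g
    rw [← AdjoinRoot.aeval_eq, ← AdjoinRoot.aeval_eq, aeval_comp]
    have h1 : aeval v (X + 1 : R[X]) = v + 1 := by simp
    rw [h1, ← hσv]
    exact (aeval_algHom_apply (σ : AdjoinRoot f →ₐ[R] AdjoinRoot f) v g).symm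
  refine ⟨σ, hσv, ?_, horder, ?_, ?_⟩
  · -- uniqueness
    intro τ hτ
    exact as_algEquiv_ext τ σ (by rw [hτ, hσv])
  · -- fixed ring
    intro x
    constructor
    · intro hx
      obtain ⟨g, hglt, rfl⟩ := hrep x
      have h1 : σ (AdjoinRoot.mk f g) = AdjoinRoot.mk f g := by
        have := hx 1
        simpa using this
      rw [hσmk g] at h1
      have hdvd : f ∣ g.comp (X + 1) - g := AdjoinRoot.mk_eq_mk.mp h1
      have hlt : (g.comp (X + 1) - g).natDegree < p := by
        refine lt_of_le_of_lt (natDegree_sub_le _ _) ?_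
        have h2 : (g.comp (X + 1)).natDegree ≤ g.natDegree := by
          refine le_trans natDegree_comp_le ?_
          have h3 : (X + 1 : R[X]).natDegree ≤ 1 := by
            refine le_trans (natDegree_add_le _ _) ?_
            simp
          calc g.natDegree * (X + 1 : R[X]).natDegree ≤ g.natDegree * 1 :=
                Nat.mul_le_mul_left _ h3
            _ = g.natDegree := Nat.mul_one _
        omega
      have h0 : g.comp (X + 1) - g = 0 := hdvd_zero _ hdvd hlt
      have hcomp : g.comp (X + 1) = g := by
        have := sub_eq_zero.mp h0
        exact this
      have hC : g = C (g.coeff 0) := as_fixed_poly p hp R g hglt hcomp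
      refine ⟨g.coeff 0, ?_⟩
      rw [AdjoinRoot.algebraMap_eq, ← AdjoinRoot.mk_C, ← hC]
    · rintro ⟨r, rfl⟩ k
      exact (σ ^ k).commutes r
  · -- Galois condition
    intro M hM k hk
    have hpk : ¬ p ∣ k := by
      intro hdvd
      exact hk (orderOf_dvd_iff_pow_eq_one.mp (horder ▸ hdvd))
    refine ⟨v, ?_⟩
    intro hmem
    have h1 : (σ ^ k) v - v = ((k : ℕ) : AdjoinRoot f) := by
      rw [hσpow k]; ring
    rw [h1] at hmem
    have hu : IsUnit ((k : ℕ) : AdjoinRoot f) := by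
      have hu' : IsUnit ((k : ℕ) : R) := as_isUnit_cast p hp R hpk
      have := hu'.map (algebraMap R (AdjoinRoot f))
      simpa using this
    exact hM.ne_top (M.eq_top_of_isUnit_mem hmem hu)
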